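/- Let J(a,b) be a tridiagonal n×n matrix with off-diagonals a_k > 0 and diagonal b. For perturbations δa ∈ ℝ^{n-1} with a + δa entrywise positive and δb ∈ ℝ^n, define b'_k = b_k + |δb_k| + |δa_{k-1}| + |δa_k| (with δa_0 = δa_n = 0). Then for every j, the j-th largest eigenvalue of J(a+δa, b+δb) is at most the j-th largest eigenvalue of J(a, b'). -/

import Mathlib

open Matrix

/-- The tridiagonal (Jacobi) `n×n` matrix with off-diagonal entries
`a 0, …, a (n-2)` (`a k` coupling sites `k` and `k+1`) and diagonal `b`. -/
def jacobi (n : ℕ) (a b : ℕ → ℝ) : Matrix (Fin n) (Fin n) ℝ :=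
  Matrix.of fun i j =>
    if (j : ℕ) = (i : ℕ) + 1 then a i
    else if (i : ℕ) = (j : ℕ) + 1 then a j
    else if i = j then b i else 0

/-- The `j`-th largest eigenvalue of a Hermitian matrix (eigenvalues sorted in
decreasing order). -/
noncomputable def sortedEigDesc {n : ℕ} {M : Matrix (Fin n) (Fin n) ℝ}
    (hM : M.IsHermitian) : Fin n → ℝ :=
  fun j => (hM.eigenvalues ∘ Tuple.sort hM.eigenvalues) j.rev

/-- Extension of a `Fin n`-vector to `ℕ` by zero. -/
def extv {n : ℕ} (x : Fin n → ℝ) (m : ℕ) : ℝ := if h : m < n then x ⟨m, h⟩ else 0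

lemma extv_coe {n : ℕ} (x : Fin n → ℝ) (i : Fin n) : extv x (i : ℕ) = x i := by
  simp [extv, i.isLt]

lemma extv_of_le {n : ℕ} (x : Fin n → ℝ) {m : ℕ} (h : n ≤ m) : extv x m = 0 := by
  simp [extv, Nat.not_lt.2 h]

lemma sum_shift {n : ℕ} (G : ℕ → ℝ) (hG : ∀ m, n ≤ m + 1 → G m = 0) :
    ∑ m ∈ Finset.range n, (if m = 0 then 0 else G (m - 1)) = ∑ m ∈ Finset.range n, G m := by
  cases n with
  | zero => simp
  | succ k =>
    rw [Finset.sum_range_succ' (fun m => if m = 0 then (0:ℝ) else G (m - 1)) k,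
        Finset.sum_range_succ G k, hG k le_rfl]
    simp

lemma quadJacobi {n : ℕ} (a b : ℕ → ℝ) (x : Fin n → ℝ) :
    x ⬝ᵥ (jacobi n a b *ᵥ x) =
      (∑ m ∈ Finset.range n, b m * extv x m ^ 2) +
        2 * ∑ m ∈ Finset.range n, a m * extv x m * extv x (m + 1) := by
  have hrow : ∀ i : Fin n, (jacobi n a b *ᵥ x) i =
      b (i : ℕ) * extv x (i : ℕ) + a (i : ℕ) * extv x ((i : ℕ) + 1) +
        (if (i : ℕ) = 0 then 0 else a ((i : ℕ) - 1) * extv x ((i : ℕ) - 1)) := by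
    intro i
    have hsplit : ∀ j : Fin n, jacobi n a b i j * x j =
        (if (j : ℕ) = (i : ℕ) + 1 then a (i : ℕ) * x j else 0) +
        ((if (i : ℕ) = (j : ℕ) + 1 then a (j : ℕ) * x j else 0) +
         (if j = i then b (i : ℕ) * x j else 0)) := by
      intro j
      simp only [jacobi, Matrix.of_apply, Fin.ext_iff]
      split_ifs <;> first | (exfalso; omega) | ring
    have : (jacobi n a b *ᵥ x) i = ∑ j : Fin n, jacobi n a b i j * x j := rfl
    rw [this]
    simp only [hsplit]
    rw [Finset.sum_add_distrib, Finset.sum_add_distrib]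
    have hS1 : (∑ j : Fin n, if (j : ℕ) = (i : ℕ) + 1 then a (i : ℕ) * x j else 0)
        = a (i : ℕ) * extv x ((i : ℕ) + 1) := by
      by_cases h : (i : ℕ) + 1 < n
      · have he : ∀ j : Fin n, ((j : ℕ) = (i : ℕ) + 1) = (j = (⟨(i : ℕ) + 1, h⟩ : Fin n)) := by
          intro j; simp [Fin.ext_iff]
        simp only [he]
        rw [Finset.sum_ite_eq' Finset.univ (⟨(i : ℕ) + 1, h⟩ : Fin n) (fun j => a (i : ℕ) * x j)]
        simp [extv, h]
      · rw [Finset.sum_eq_zero, extv_of_le x (Nat.le_of_not_lt h)]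
        · ring
        · intro j _
          rw [if_neg]
          omega
    have hS2 : (∑ j : Fin n, if (i : ℕ) = (j : ℕ) + 1 then a (j : ℕ) * x j else 0)
        = if (i : ℕ) = 0 then 0 else a ((i : ℕ) - 1) * extv x ((i : ℕ) - 1) := by
      by_cases hi : (i : ℕ) = 0
      · rw [if_pos hi, Finset.sum_eq_zero]
        intro j _
        rw [if_neg]; omega
      · rw [if_neg hi]
        have hlt : (i : ℕ) - 1 < n := by have := i.isLt; omega
        have he : ∀ j : Fin n, ((i : ℕ) = (j : ℕ) + 1) = (j = (⟨(i : ℕ) - 1, hlt⟩ : Fin n)) := by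
          intro j; simp [Fin.ext_iff]; omega
        simp only [he]
        rw [Finset.sum_ite_eq' Finset.univ (⟨(i : ℕ) - 1, hlt⟩ : Fin n)
          (fun j => a (j : ℕ) * x j)]
        simp [extv, hlt]
    have hS3 : (∑ j : Fin n, if j = i then b (i : ℕ) * x j else 0) = b (i : ℕ) * extv x (i : ℕ) := by
      rw [Finset.sum_ite_eq' Finset.univ i (fun j => b (i : ℕ) * x j)]
      simp [extv_coe]
    rw [hS1, hS2, hS3]
    ring
  have hdot : x ⬝ᵥ (jacobi n a b *ᵥ x) = ∑ i : Fin n,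
      (extv x (i : ℕ) * (b (i : ℕ) * extv x (i : ℕ) + a (i : ℕ) * extv x ((i : ℕ) + 1) +
        (if (i : ℕ) = 0 then 0 else a ((i : ℕ) - 1) * extv x ((i : ℕ) - 1)))) := by
    unfold dotProduct
    refine Finset.sum_congr rfl fun i _ => ?_
    rw [hrow i, extv_coe]
  rw [hdot, Fin.sum_univ_eq_sum_range (fun m =>
      extv x m * (b m * extv x m + a m * extv x (m + 1) +
        (if m = 0 then 0 else a (m - 1) * extv x (m - 1)))) n]
  have hper : ∀ m, extv x m * (b m * extv x m + a m * extv x (m + 1) +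
        (if m = 0 then 0 else a (m - 1) * extv x (m - 1)))
      = (b m * extv x m ^ 2 + a m * extv x m * extv x (m + 1)) +
        (if m = 0 then 0 else a (m - 1) * extv x (m - 1) * extv x (m - 1 + 1)) := by
    intro m
    rcases Nat.eq_zero_or_pos m with hm | hm
    · subst hm; simp; ring
    · rw [if_neg (by omega), if_neg (by omega)]
      have : m - 1 + 1 = m := by omega
      rw [this]; ring
  simp only [hper]
  rw [Finset.sum_add_distrib, sum_shift (fun m => a m * extv x m * extv x (m + 1))
    (fun m hm => by
      show a m * extv x m * extv x (m + 1) = 0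
      rw [extv_of_le x hm]; ring), Finset.sum_add_distrib]
  rw [Finset.mul_sum]
  rw [Finset.sum_congr rfl (fun m _ => two_mul (a m * extv x m * extv x (m + 1)))]
  rw [Finset.sum_add_distrib]
  ring

lemma quad_mono {n : ℕ} (a δa b δb : ℕ → ℝ) (x : Fin n → ℝ) :
    x ⬝ᵥ (jacobi n (fun k => a k + δa k) (fun k => b k + δb k) *ᵥ x) ≤
      x ⬝ᵥ (jacobi n a (fun k => b k + |δb k| +
        (if k = 0 then 0 else |δa (k - 1)|) +
        (if k + 1 < n then |δa k| else 0)) *ᵥ x) := by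
  rw [quadJacobi, quadJacobi]
  have hshift : ∑ m ∈ Finset.range n,
      (if m = 0 then 0 else |δa (m - 1)|) * extv x m ^ 2
      = ∑ m ∈ Finset.range n, |δa m| * extv x (m + 1) ^ 2 := by
    rw [← sum_shift (fun m => |δa m| * extv x (m + 1) ^ 2) (fun m hm => by
      show |δa m| * extv x (m + 1) ^ 2 = 0
      rw [extv_of_le x hm]; ring)]
    refine Finset.sum_congr rfl fun m _ => ?_
    by_cases hm : m = 0
    · simp [hm]
    · rw [if_neg hm, if_neg hm]
      have h1 : m - 1 + 1 = m := by omega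
      rw [h1]
  have hL : (∑ m ∈ Finset.range n, (b m + δb m) * extv x m ^ 2) +
        2 * ∑ m ∈ Finset.range n, (a m + δa m) * extv x m * extv x (m + 1)
      = ∑ m ∈ Finset.range n, ((b m + δb m) * extv x m ^ 2 +
          2 * ((a m + δa m) * extv x m * extv x (m + 1))) := by
    rw [Finset.sum_add_distrib, Finset.mul_sum]
  have hR : (∑ m ∈ Finset.range n, (b m + |δb m| +
        (if m = 0 then 0 else |δa (m - 1)|) +
        (if m + 1 < n then |δa m| else 0)) * extv x m ^ 2) +
        2 * ∑ m ∈ Finset.range n, a m * extv x m * extv x (m + 1)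
      = ∑ m ∈ Finset.range n, ((b m + |δb m| +
          (if m + 1 < n then |δa m| else 0)) * extv x m ^ 2 +
          |δa m| * extv x (m + 1) ^ 2 +
          2 * (a m * extv x m * extv x (m + 1))) := by
    have h1 : ∀ m : ℕ, (b m + |δb m| + (if m = 0 then 0 else |δa (m - 1)|) +
        (if m + 1 < n then |δa m| else 0)) * extv x m ^ 2
        = ((b m + |δb m| + (if m + 1 < n then |δa m| else 0)) * extv x m ^ 2)
          + (if m = 0 then 0 else |δa (m - 1)|) * extv x m ^ 2 := by
      intro m; ring
    simp only [h1]
    rw [Finset.sum_add_distrib, hshift, Finset.mul_sum,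
      ← Finset.sum_add_distrib, ← Finset.sum_add_distrib]
  rw [hL, hR]
  refine Finset.sum_le_sum fun m _ => ?_
  have hδb := mul_le_mul_of_nonneg_right (le_abs_self (δb m)) (sq_nonneg (extv x m))
  by_cases hd : m + 1 < n
  · rw [if_pos hd]
    have h1 : 0 ≤ (|δa m| - δa m) * (extv x m + extv x (m + 1)) ^ 2 :=
      mul_nonneg (by linarith [le_abs_self (δa m)]) (sq_nonneg _)
    have h2 : 0 ≤ (|δa m| + δa m) * (extv x m - extv x (m + 1)) ^ 2 :=
      mul_nonneg (by linarith [neg_abs_le (δa m)]) (sq_nonneg _)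
    nlinarith [h1, h2]
  · rw [if_neg hd, extv_of_le x (by omega : n ≤ m + 1)]
    nlinarith [abs_nonneg (δa m)]

section spectral
variable {n : ℕ} {A : Matrix (Fin n) (Fin n) ℝ} (hA : A.IsHermitian)

/-- coordinates of `x` in the eigenbasis -/
noncomputable def eigCoord (hA : A.IsHermitian) (x : Fin n → ℝ) : Fin n → ℝ :=
  (hA.eigenvectorUnitary : Matrix (Fin n) (Fin n) ℝ)ᵀ *ᵥ x

lemma star_eq_transpose (U : Matrix (Fin n) (Fin n) ℝ) : star U = Uᵀ := by
  rw [Matrix.star_eq_conjTranspose, Matrix.conjTranspose_eq_transpose_of_trivial]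

lemma mulVec_eigCoord (x : Fin n → ℝ) :
    (hA.eigenvectorUnitary : Matrix (Fin n) (Fin n) ℝ) *ᵥ eigCoord hA x = x := by
  rw [eigCoord, Matrix.mulVec_mulVec, ← star_eq_transpose,
    (Matrix.mem_unitaryGroup_iff.mp hA.eigenvectorUnitary.2), Matrix.one_mulVec]

lemma quad_spectral (x : Fin n → ℝ) :
    x ⬝ᵥ (A *ᵥ x) = ∑ m, hA.eigenvalues m * (eigCoord hA x m) ^ 2 := by
  set U : Matrix (Fin n) (Fin n) ℝ := (hA.eigenvectorUnitary : Matrix (Fin n) (Fin n) ℝ) with hU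
  have hAx : A *ᵥ x = U *ᵥ ((Matrix.diagonal (RCLike.ofReal ∘ hA.eigenvalues)) *ᵥ eigCoord hA x) := by
    conv_lhs => rw [hA.spectral_theorem]
    rw [Unitary.conjStarAlgAut_apply, star_eq_transpose, ← Matrix.mulVec_mulVec, ← Matrix.mulVec_mulVec]
    rfl
  rw [hAx, Matrix.dotProduct_mulVec, ← Matrix.mulVec_transpose]
  have : Uᵀ *ᵥ x = eigCoord hA x := rfl
  rw [this]
  unfold dotProduct
  refine Finset.sum_congr rfl fun m _ => ?_
  rw [Matrix.mulVec_diagonal]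
  simp
  ring
lemma norm_spectral (x : Fin n → ℝ) :
    x ⬝ᵥ x = ∑ m, (eigCoord hA x m) ^ 2 := by
  have h1 : eigCoord hA x ⬝ᵥ eigCoord hA x =
      eigCoord hA x ⬝ᵥ ((hA.eigenvectorUnitary : Matrix (Fin n) (Fin n) ℝ)ᵀ *ᵥ x) := rfl
  rw [Matrix.dotProduct_mulVec, Matrix.vecMul_transpose, mulVec_eigCoord] at h1
  rw [← h1]
  unfold dotProduct
  exact Finset.sum_congr rfl fun m _ => (sq (eigCoord hA x m)).symm

end spectral

lemma eig_mono {n : ℕ} {A B : Matrix (Fin n) (Fin n) ℝ} (hA : A.IsHermitian) (hB : B.IsHermitian)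
    (h : ∀ x : Fin n → ℝ, x ⬝ᵥ (A *ᵥ x) ≤ x ⬝ᵥ (B *ᵥ x)) (k : Fin n) :
    hA.eigenvalues (Tuple.sort hA.eigenvalues k) ≤ hB.eigenvalues (Tuple.sort hB.eigenvalues k) := by
  classical
  set σA := Tuple.sort hA.eigenvalues with hσA
  set σB := Tuple.sort hB.eigenvalues with hσB
  -- a linear map encoding the n-1 constraints
  let L : (Fin n → ℝ) →ₗ[ℝ] ({p : Fin n // p ≠ k} → ℝ) :=
    { toFun := fun x p => if (p : Fin n) < k then eigCoord hA x (σA p) else eigCoord hB x (σB p)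
      map_add' := by
        intro x y; funext p
        by_cases hp : (p : Fin n) < k <;>
          simp [hp, eigCoord, Matrix.mulVec_add]
      map_smul' := by
        intro c x; funext p
        by_cases hp : (p : Fin n) < k <;>
          simp [hp, eigCoord, Matrix.mulVec_smul] }
  have hcard : Fintype.card {p : Fin n // p ≠ k} = n - 1 := by
    simp [Fintype.card_subtype_compl]
  have hker : LinearMap.ker L ≠ ⊥ := by
    intro hbot
    have hinj : Function.Injective L := LinearMap.ker_eq_bot.mp hbot
    have hle := LinearMap.finrank_le_finrank_of_injective hinj
    rw [Module.finrank_fin_fun, Module.finrank_pi] at hle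
    rw [hcard] at hle
    have := k.pos
    omega
  obtain ⟨x, hxker, hx0⟩ := (Submodule.ne_bot_iff _).mp hker
  have hLx : ∀ p : {p : Fin n // p ≠ k},
      (if (p : Fin n) < k then eigCoord hA x (σA p) else eigCoord hB x (σB p)) = 0 := by
    intro p
    have := congrFun (LinearMap.mem_ker.mp hxker) p
    exact this
  have hcA : ∀ p : Fin n, p < k → eigCoord hA x (σA p) = 0 := by
    intro p hp
    have := hLx ⟨p, ne_of_lt hp⟩
    rwa [if_pos hp] at this
  have hcB : ∀ p : Fin n, k < p → eigCoord hB x (σB p) = 0 := by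
    intro p hp
    have := hLx ⟨p, ne_of_gt hp⟩
    rwa [if_neg (not_lt.mpr hp.le)] at this
  -- positivity of the norm
  have hxx : 0 < x ⬝ᵥ x := by
    obtain ⟨i, hi⟩ := Function.ne_iff.mp hx0
    unfold dotProduct
    have : ∀ j ∈ Finset.univ, 0 ≤ x j * x j := fun j _ => mul_self_nonneg _
    refine Finset.sum_pos' this ⟨i, Finset.mem_univ i, ?_⟩
    exact mul_self_pos.mpr hi
  -- lower bound for A
  have hAlow : hA.eigenvalues (σA k) * (x ⬝ᵥ x) ≤ x ⬝ᵥ (A *ᵥ x) := by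
    rw [quad_spectral hA x, norm_spectral hA x, Finset.mul_sum]
    rw [← Equiv.sum_comp σA (fun m => hA.eigenvalues (σA k) * eigCoord hA x m ^ 2)]
    rw [← Equiv.sum_comp σA (fun m => hA.eigenvalues m * eigCoord hA x m ^ 2)]
    refine Finset.sum_le_sum fun p _ => ?_
    by_cases hp : p < k
    · rw [hcA p hp]; simp
    · exact mul_le_mul_of_nonneg_right
        (Tuple.monotone_sort hA.eigenvalues (not_lt.mp hp)) (sq_nonneg _)
  -- upper bound for B
  have hBhigh : x ⬝ᵥ (B *ᵥ x) ≤ hB.eigenvalues (σB k) * (x ⬝ᵥ x) := by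
    rw [quad_spectral hB x, norm_spectral hB x, Finset.mul_sum]
    rw [← Equiv.sum_comp σB (fun m => hB.eigenvalues (σB k) * eigCoord hB x m ^ 2)]
    rw [← Equiv.sum_comp σB (fun m => hB.eigenvalues m * eigCoord hB x m ^ 2)]
    refine Finset.sum_le_sum fun p _ => ?_
    by_cases hp : k < p
    · rw [hcB p hp]; simp
    · exact mul_le_mul_of_nonneg_right
        (Tuple.monotone_sort hB.eigenvalues (not_lt.mp hp)) (sq_nonneg _)
  have := hAlow.trans ((h x).trans hBhigh)
  exact le_of_mul_le_mul_right this hxx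

/-- Hundertmark–Simon reduction: off-diagonal perturbations of a Jacobi matrix
can be absorbed into the diagonal, increasing each eigenvalue. -/
theorem jacobi_offdiag_reduction {n : ℕ} (a δa b δb : ℕ → ℝ)
    (ha : ∀ k, k + 1 < n → 0 < a k)
    (hada : ∀ k, k + 1 < n → 0 < a k + δa k)
    (h1 : (jacobi n (fun k => a k + δa k) (fun k => b k + δb k)).IsHermitian)
    (h2 : (jacobi n a (fun k => b k + |δb k| +
        (if k = 0 then 0 else |δa (k - 1)|) +
        (if k + 1 < n then |δa k| else 0))).IsHermitian) :
    ∀ j : Fin n, sortedEigDesc h1 j ≤ sortedEigDesc h2 j := by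
  intro j
  unfold sortedEigDesc
  exact eig_mono h1 h2 (fun x => quad_mono a δa b δb x) j.rev
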